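/- The function p ↦ d_p := (2^(1/p) Γ(1+1/p))² / (2π) is strictly decreasing on [2,∞), with d_2 = 1/4 and lim_{p→∞} d_p = 1/(2π). -/

import Mathlib

open Real Set Filter

noncomputable def dconst (p : ℝ) : ℝ :=
  ((2 : ℝ) ^ (1 / p) * Real.Gamma (1 + 1 / p)) ^ 2 / (2 * π)

/-- `log 2 > 2/3`, since `exp 2 < 8`. -/
lemma two_thirds_lt_log_two : (2 : ℝ) / 3 < Real.log 2 := by
  rw [Real.lt_log_iff_exp_lt (by norm_num)]
  have h : Real.exp (2 / 3) ^ (3 : ℕ) < 2 ^ (3 : ℕ) := by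
    rw [← Real.exp_nat_mul]
    norm_num
    calc Real.exp 2 = Real.exp 1 ^ (2 : ℕ) := by rw [← Real.exp_nat_mul]; norm_num
    _ < 2.7182818286 ^ (2 : ℕ) := by
        exact pow_lt_pow_left₀ Real.exp_one_lt_d9 (Real.exp_pos 1).le (by norm_num)
    _ < 8 := by norm_num
  exact lt_of_pow_lt_pow_left₀ 3 (by norm_num) h

/-- The auxiliary convex function. -/
noncomputable def Faux (z : ℝ) : ℝ := Real.log (Real.Gamma z) + Real.log 2 * z

lemma Faux_convex : ConvexOn ℝ (Ioi 0) Faux := by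
  have h1 : ConvexOn ℝ (Ioi (0:ℝ)) (Real.log ∘ Real.Gamma) := Real.convexOn_log_Gamma
  have h2 : ConvexOn ℝ (Ioi (0:ℝ)) (fun z : ℝ => Real.log 2 * z) := by
    exact (convexOn_id (convex_Ioi 0)).smul (Real.log_nonneg one_le_two)
  exact h1.add h2

lemma Faux_hasDerivAt_one :
    HasDerivAt Faux (Real.log 2 - Real.eulerMascheroniConstant) 1 := by
  have h1 : HasDerivAt (fun z => Real.log (Real.Gamma z))
      (-Real.eulerMascheroniConstant) 1 := by
    have := (Real.hasDerivAt_Gamma_one).log (by rw [Real.Gamma_one]; norm_num)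
    simpa [Real.Gamma_one] using this
  have h2 : HasDerivAt (fun z : ℝ => Real.log 2 * z) (Real.log 2) 1 := by
    simpa using (hasDerivAt_id (1:ℝ)).const_mul (Real.log 2)
  have := h1.add h2
  exact this.congr_deriv (by ring)

lemma Faux_deriv_pos : 0 < Real.log 2 - Real.eulerMascheroniConstant := by
  have := Real.eulerMascheroniConstant_lt_two_thirds
  have := two_thirds_lt_log_two
  linarith

/-- `Faux` is strictly increasing on `[1, ∞)`. -/
lemma Faux_lt_Faux {a b : ℝ} (ha : 1 ≤ a) (hab : a < b) : Faux a < Faux b := by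
  set d := Real.log 2 - Real.eulerMascheroniConstant with hd
  have hd0 : 0 < d := Faux_deriv_pos
  have key : ∀ x y : ℝ, 1 ≤ x → x < y → d ≤ (Faux y - Faux x) / (y - x) := by
    intro x y hx hxy
    rcases eq_or_lt_of_le hx with rfl | hx1
    · have := Faux_convex.le_slope_of_hasDerivAt (mem_Ioi.2 one_pos)
        (mem_Ioi.2 (by linarith)) hxy Faux_hasDerivAt_one
      rwa [slope_def_field] at this
    · have h1 : d ≤ (Faux x - Faux 1) / (x - 1) := by
        have := Faux_convex.le_slope_of_hasDerivAt (mem_Ioi.2 one_pos)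
          (mem_Ioi.2 (by linarith : (0:ℝ) < x)) hx1 Faux_hasDerivAt_one
        rwa [slope_def_field] at this
      have h2 : (Faux x - Faux 1) / (x - 1) ≤ (Faux y - Faux x) / (y - x) :=
        Faux_convex.slope_mono_adjacent (mem_Ioi.2 one_pos)
          (mem_Ioi.2 (by linarith : (0:ℝ) < y)) hx1 hxy
      linarith
  have h := key a b ha hab
  have hba : 0 < b - a := by linarith
  nlinarith [mul_le_mul_of_nonneg_right h hba.le, div_mul_cancel₀ (Faux b - Faux a) hba.ne']

/-- `x ↦ 2^x * Γ(1+x)` is strictly increasing on `(0, ∞)` (in fact `[0,∞)`). -/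
lemma gmono {x y : ℝ} (hx : 0 ≤ x) (hxy : x < y) :
    (2 : ℝ) ^ x * Real.Gamma (1 + x) < (2 : ℝ) ^ y * Real.Gamma (1 + y) := by
  have key : ∀ t : ℝ, 0 ≤ t →
      (2 : ℝ) ^ t * Real.Gamma (1 + t) * 2 = Real.exp (Faux (1 + t)) := by
    intro t ht
    have hG : 0 < Real.Gamma (1 + t) := Real.Gamma_pos_of_pos (by linarith)
    rw [Faux, Real.exp_add, Real.exp_log hG, Real.exp_mul, Real.exp_log two_pos,
      Real.rpow_add two_pos 1 t, Real.rpow_one]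
    ring
  have h := Faux_lt_Faux (a := 1 + x) (b := 1 + y) (by linarith) (by linarith)
  have h2 := Real.exp_lt_exp.2 h
  rw [← key x hx, ← key y (by linarith)] at h2
  linarith

theorem stmt3 :
    StrictAntiOn dconst (Ici 2) ∧ dconst 2 = 1 / 4 ∧
      Tendsto dconst atTop (nhds (1 / (2 * π))) := by
  refine ⟨?_, ?_, ?_⟩
  · intro p hp q hq hpq
    simp only [mem_Ici] at hp hq
    have hp0 : 0 < p := by linarith
    have hq0 : 0 < q := by linarith
    have h1 : 0 < 1 / q := by positivity
    have h2 : 1 / q < 1 / p := by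
      apply div_lt_div_of_pos_left one_pos hp0 hpq
    have hlt := gmono h1.le h2
    have hqpos : 0 < (2 : ℝ) ^ (1 / q) * Real.Gamma (1 + 1 / q) := by
      have : 0 < Real.Gamma (1 + 1 / q) := Real.Gamma_pos_of_pos (by linarith)
      positivity
    have hsq : ((2 : ℝ) ^ (1 / q) * Real.Gamma (1 + 1 / q)) ^ 2 <
        ((2 : ℝ) ^ (1 / p) * Real.Gamma (1 + 1 / p)) ^ 2 :=
      pow_lt_pow_left₀ hlt hqpos.le (by norm_num)
    unfold dconst
    exact div_lt_div_of_pos_right hsq (by positivity)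
  · unfold dconst
    have h32 : Real.Gamma (1 + 1 / 2) = √π / 2 := by
      rw [show (1 : ℝ) + 1 / 2 = 1 / 2 + 1 by ring,
        Real.Gamma_add_one (by norm_num), Real.Gamma_one_half_eq]
      ring
    have hsq2 : ((2 : ℝ) ^ ((1:ℝ) / 2)) ^ 2 = 2 := by
      rw [← Real.rpow_natCast ((2:ℝ) ^ ((1:ℝ)/2)) 2, ← Real.rpow_mul (by norm_num)]
      norm_num
    rw [h32, mul_pow, hsq2, div_pow, Real.sq_sqrt pi_pos.le]
    field_simp
    ring
  · have hc : ContinuousAt (fun x : ℝ => ((2:ℝ) ^ x * Real.Gamma (1 + x)) ^ 2 / (2 * π)) 0 := by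
      apply ContinuousAt.div_const
      apply ContinuousAt.pow
      apply ContinuousAt.mul
      · exact Real.continuousAt_const_rpow two_ne_zero
      · have hG : ContinuousAt Real.Gamma 1 :=
          (Real.differentiableAt_Gamma (fun m => by
            intro h
            have hm : (0:ℝ) ≤ (m:ℝ) := Nat.cast_nonneg m
            linarith)).continuousAt
        have heq : (fun x : ℝ => Real.Gamma (1 + x)) = Real.Gamma ∘ (fun x => 1 + x) := rfl
        rw [heq]
        apply ContinuousAt.comp
        · simpa using hG
        · exact continuousAt_const.add continuousAt_id
    have hlim : Tendsto (fun p : ℝ => 1 / p) atTop (nhds 0) := by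
      simpa [one_div] using tendsto_inv_atTop_zero
    have := hc.tendsto.comp hlim
    have h0 : ((2:ℝ) ^ (0:ℝ) * Real.Gamma (1 + 0)) ^ 2 / (2 * π) = 1 / (2 * π) := by
      rw [Real.rpow_zero, add_zero, Real.Gamma_one]; norm_num
    rw [h0] at this
    exact this.congr (fun p => rfl)
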